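/- Let p₂ < p₃ < ... < p_s be primes with p₂ > 3. Then the product ∏_{i=2}^{s} (p_i² - 1)/(p_i² + 1) is greater than 5/6. -/

import Mathlib

open Filter Topology

noncomputable def zpow2Hom : ℕ →*₀ ℝ where
  toFun n := ((n : ℝ) ^ 2)⁻¹
  map_zero' := by norm_num
  map_one' := by norm_num
  map_mul' x y := by push_cast; rw [mul_pow, mul_inv]

noncomputable def zpow4Hom : ℕ →*₀ ℝ where
  toFun n := ((n : ℝ) ^ 4)⁻¹
  map_zero' := by norm_num
  map_one' := by norm_num
  map_mul' x y := by push_cast; rw [mul_pow, mul_inv]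

lemma summable2 : Summable (fun n : ℕ => ‖zpow2Hom n‖) := by
  have : Summable (fun n : ℕ => 1 / (n : ℝ) ^ 2) :=
    Real.summable_one_div_nat_pow.mpr one_lt_two
  refine this.congr fun n => ?_
  simp [zpow2Hom, abs_of_nonneg, one_div]

lemma summable4 : Summable (fun n : ℕ => ‖zpow4Hom n‖) := by
  have : Summable (fun n : ℕ => 1 / (n : ℝ) ^ 4) :=
    Real.summable_one_div_nat_pow.mpr (by norm_num)
  refine this.congr fun n => ?_
  simp [zpow4Hom, abs_of_nonneg, one_div]

lemma hasProd2 :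
    HasProd (fun p : Nat.Primes => (1 - (((p : ℕ) : ℝ) ^ 2)⁻¹)⁻¹) (Real.pi ^ 2 / 6) := by
  have h := EulerProduct.eulerProduct_completely_multiplicative_hasProd (f := zpow2Hom) summable2
  have ht : ∑' n : ℕ, zpow2Hom n = Real.pi ^ 2 / 6 := by
    rw [← hasSum_zeta_two.tsum_eq]
    exact tsum_congr fun n => by simp [zpow2Hom, one_div]
  rw [ht] at h
  exact h

lemma hasProd4 :
    HasProd (fun p : Nat.Primes => (1 - (((p : ℕ) : ℝ) ^ 4)⁻¹)⁻¹) (Real.pi ^ 4 / 90) := by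
  have h := EulerProduct.eulerProduct_completely_multiplicative_hasProd (f := zpow4Hom) summable4
  have ht : ∑' n : ℕ, zpow4Hom n = Real.pi ^ 4 / 90 := by
    rw [← hasSum_zeta_four.tsum_eq]
    exact tsum_congr fun n => by simp [zpow4Hom, one_div]
  rw [ht] at h
  exact h

noncomputable def FF (p : Nat.Primes) : ℝ :=
  (((p : ℕ) : ℝ) ^ 2 - 1) / (((p : ℕ) : ℝ) ^ 2 + 1)

lemma two_le_val (p : Nat.Primes) : (2 : ℝ) ≤ ((p : ℕ) : ℝ) := by
  exact_mod_cast p.prop.two_le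

lemma hasProdF : HasProd FF (2 / 5) := by
  have hA := hasProd2
  have hB := hasProd4
  have hkey : ∀ s : Finset Nat.Primes,
      ∏ p ∈ s, FF p =
        (∏ p ∈ s, (1 - (((p : ℕ) : ℝ) ^ 4)⁻¹)⁻¹) /
          ((∏ p ∈ s, (1 - (((p : ℕ) : ℝ) ^ 2)⁻¹)⁻¹) *
            (∏ p ∈ s, (1 - (((p : ℕ) : ℝ) ^ 2)⁻¹)⁻¹)) := by
    intro s
    rw [← Finset.prod_mul_distrib, ← Finset.prod_div_distrib]
    refine Finset.prod_congr rfl fun p _ => ?_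
    have hx : (2 : ℝ) ≤ ((p : ℕ) : ℝ) := two_le_val p
    set x : ℝ := ((p : ℕ) : ℝ) with hxdef
    have hx0 : x ≠ 0 := by nlinarith
    have hx2 : (4 : ℝ) ≤ x ^ 2 := by nlinarith
    have hx4 : (16 : ℝ) ≤ x ^ 4 := by nlinarith
    have h1 : x ^ 2 ≠ 0 := pow_ne_zero _ hx0
    have h2 : x ^ 4 ≠ 0 := pow_ne_zero _ hx0
    have h3 : x ^ 2 - 1 ≠ 0 := by nlinarith
    have h4 : x ^ 4 - 1 ≠ 0 := by nlinarith
    have h5 : x ^ 2 + 1 ≠ 0 := by nlinarith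
    have e2 : (1 - (x ^ 2)⁻¹)⁻¹ = x ^ 2 / (x ^ 2 - 1) := by
      rw [show (1 - (x ^ 2)⁻¹) = (x ^ 2 - 1) / x ^ 2 by field_simp, inv_div]
    have e4 : (1 - (x ^ 4)⁻¹)⁻¹ = x ^ 4 / (x ^ 4 - 1) := by
      rw [show (1 - (x ^ 4)⁻¹) = (x ^ 4 - 1) / x ^ 4 by field_simp, inv_div]
    unfold FF
    rw [e2, e4, ← hxdef]
    field_simp
    ring
  have hne : Real.pi ^ 2 / 6 * (Real.pi ^ 2 / 6) ≠ 0 := by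
    have := Real.pi_ne_zero
    positivity
  have htend : Tendsto
      (fun s : Finset Nat.Primes =>
        (∏ p ∈ s, (1 - (((p : ℕ) : ℝ) ^ 4)⁻¹)⁻¹) /
          ((∏ p ∈ s, (1 - (((p : ℕ) : ℝ) ^ 2)⁻¹)⁻¹) *
            (∏ p ∈ s, (1 - (((p : ℕ) : ℝ) ^ 2)⁻¹)⁻¹)))
      atTop (𝓝 (Real.pi ^ 4 / 90 / (Real.pi ^ 2 / 6 * (Real.pi ^ 2 / 6)))) :=
    Tendsto.div hB (Tendsto.mul hA hA) hne
  have hconst : Real.pi ^ 4 / 90 / (Real.pi ^ 2 / 6 * (Real.pi ^ 2 / 6)) = 2 / 5 := by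
    have hpi : Real.pi ≠ 0 := Real.pi_ne_zero
    field_simp
    ring
  rw [hconst] at htend
  exact (htend.congr fun s => (hkey s).symm)

lemma FF_nonneg (p : Nat.Primes) : 0 ≤ FF p := by
  have hx := two_le_val p
  unfold FF
  apply div_nonneg <;> nlinarith

lemma FF_le_one (p : Nat.Primes) : FF p ≤ 1 := by
  have hx := two_le_val p
  unfold FF
  rw [div_le_one (by nlinarith)]
  nlinarith

lemma FF_lt_one (p : Nat.Primes) : FF p < 1 := by
  have hx := two_le_val p
  unfold FF
  rw [div_lt_one (by nlinarith)]
  nlinarith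

lemma FF_pos (p : Nat.Primes) : 0 < FF p := by
  have hx := two_le_val p
  unfold FF
  apply div_pos <;> nlinarith

lemma le_finset_prod (T : Finset Nat.Primes) : (2 : ℝ) / 5 ≤ ∏ p ∈ T, FF p := by
  refine le_of_tendsto hasProdF ?_
  filter_upwards [eventually_ge_atTop T] with s hs
  calc ∏ p ∈ s, FF p = (∏ p ∈ s \ T, FF p) * ∏ p ∈ T, FF p := (Finset.prod_sdiff hs).symm
    _ ≤ 1 * ∏ p ∈ T, FF p := by
        apply mul_le_mul_of_nonneg_right
        · exact Finset.prod_le_one (fun i _ => FF_nonneg i) (fun i _ => FF_le_one i)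
        · exact Finset.prod_nonneg fun i _ => FF_nonneg i
    _ = ∏ p ∈ T, FF p := one_mul _

theorem prod_sq_sub_one_div_sq_add_one_gt (S : Finset ℕ)
    (hS : ∀ q ∈ S, q.Prime ∧ 3 < q) :
    (5 / 6 : ℚ) < ∏ q ∈ S, ((q : ℚ) ^ 2 - 1) / ((q : ℚ) ^ 2 + 1) := by
  -- pick a prime p₀ not in S and > 3
  obtain ⟨p₀, hp₀le, hp₀p⟩ := Nat.exists_infinite_primes (S.sup id + 4)
  have hp₀S : p₀ ∉ S := fun h => by
    have : p₀ ≤ S.sup id := Finset.le_sup (f := id) h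
    omega
  have hp₀4 : 4 ≤ p₀ := le_trans (by omega) hp₀le
  -- embed S into Nat.Primes
  let e : { x // x ∈ S } → Nat.Primes := fun q => ⟨q.1, (hS q.1 q.2).1⟩
  have he : Function.Injective e := by
    intro a b h
    exact Subtype.ext (congrArg (fun p : Nat.Primes => (p : ℕ)) h)
  let S' : Finset Nat.Primes := S.attach.map ⟨e, he⟩
  have hmemS' : ∀ p : Nat.Primes, p ∈ S' ↔ (p : ℕ) ∈ S := by
    intro p
    simp only [S', Finset.mem_map, Finset.mem_attach, Function.Embedding.coeFn_mk, true_and]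
    constructor
    · rintro ⟨a, rfl⟩; exact a.2
    · intro hp; exact ⟨⟨(p : ℕ), hp⟩, Subtype.ext rfl⟩
  have hprodS' : ∏ p ∈ S', FF p = ∏ q ∈ S, ((q : ℝ) ^ 2 - 1) / ((q : ℝ) ^ 2 + 1) := by
    rw [Finset.prod_map]
    rw [← Finset.prod_attach S (fun q => ((q : ℝ) ^ 2 - 1) / ((q : ℝ) ^ 2 + 1))]
    rfl
  let P2 : Nat.Primes := ⟨2, Nat.prime_two⟩
  let P3 : Nat.Primes := ⟨3, Nat.prime_three⟩
  let P0 : Nat.Primes := ⟨p₀, hp₀p⟩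
  have h2S' : P2 ∉ S' := by
    rw [hmemS']
    intro h; exact absurd (hS 2 h).2 (by norm_num)
  have h3S' : P3 ∉ S' := by
    rw [hmemS']
    intro h; exact absurd (hS 3 h).2 (by norm_num)
  have h0S' : P0 ∉ S' := by rw [hmemS']; exact hp₀S
  have h0ne2 : P0 ≠ P2 := by
    intro h; replace h := congrArg (fun p : Nat.Primes => (p : ℕ)) h; simp [P0, P2] at h; omega
  have h0ne3 : P0 ≠ P3 := by
    intro h; replace h := congrArg (fun p : Nat.Primes => (p : ℕ)) h; simp [P0, P3] at h; omega
  have h2ne3 : P2 ≠ P3 := by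
    intro h; replace h := congrArg (fun p : Nat.Primes => (p : ℕ)) h; simp [P2, P3] at h
  -- the big finset
  have key := le_finset_prod (insert P2 (insert P3 (insert P0 S')))
  rw [Finset.prod_insert (by simp [Finset.mem_insert, h2S', h2ne3, (by simpa using h0ne2.symm : ¬ P2 = P0)]),
      Finset.prod_insert (by simp [Finset.mem_insert, h3S', (by simpa using h0ne3.symm : ¬ P3 = P0)]),
      Finset.prod_insert h0S', hprodS'] at key
  have hF2 : FF P2 = 3 / 5 := by unfold FF; norm_num [P2]
  have hF3 : FF P3 = 4 / 5 := by unfold FF; norm_num [P3]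
  rw [hF2, hF3] at key
  set Q : ℝ := ∏ q ∈ S, ((q : ℝ) ^ 2 - 1) / ((q : ℝ) ^ 2 + 1) with hQ
  have hQpos : 0 < Q := by
    rw [hQ]
    apply Finset.prod_pos
    intro q hq
    have h5 : 5 ≤ q := by
      have hq3 := (hS q hq).2
      have hqp := (hS q hq).1
      by_contra h
      have hq4 : q = 4 := by omega
      rw [hq4] at hqp
      exact absurd hqp (by decide)
    have hx : (5 : ℝ) ≤ (q : ℝ) := by exact_mod_cast h5
    apply div_pos <;> nlinarith
  have hFP0lt := FF_lt_one P0
  have hFP0pos := FF_pos P0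
  -- key : 2/5 ≤ 3/5 * (4/5 * (FF P0 * Q))
  have h56 : (5 : ℝ) / 6 ≤ FF P0 * Q := by nlinarith
  have hreal : (5 : ℝ) / 6 < Q := by nlinarith
  -- cast back to ℚ
  have hcast : ((∏ q ∈ S, ((q : ℚ) ^ 2 - 1) / ((q : ℚ) ^ 2 + 1) : ℚ) : ℝ) = Q := by
    rw [hQ]
    push_cast
    rfl
  rw [show ((5 : ℚ) / 6) = ((5 : ℚ) / 6) from rfl]
  have : ((5 / 6 : ℚ) : ℝ) < ((∏ q ∈ S, ((q : ℚ) ^ 2 - 1) / ((q : ℚ) ^ 2 + 1) : ℚ) : ℝ) := by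
    rw [hcast]; push_cast; exact hreal
  exact_mod_cast this
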